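/- For every term $M$ of $\mathsf{PCFL}_\oplus$, if $M \Downarrow \mathscr{D}$ and $M \Downarrow \mathscr{E}$ (two derivable big-step approximation judgements), then there exists a value distribution $\mathscr{F}$ with $M \Downarrow \mathscr{F}$, $\mathscr{D} \le \mathscr{F}$ pointwise, and $\mathscr{E} \le \mathscr{F}$ pointwise. Consequently, the set of distributions $\mathscr{D}$ with $M\Downarrow\mathscr{D}$ is directed, and its pointwise supremum $\llbracket M \rrbracket$ is a well-defined value distribution. -/

import Mathlib

open scoped ENNReal Classical

namespace PCFL

/-- Types of PCFL⊕. -/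
inductive Ty : Type
  | bool | int
  | arrow (a b : Ty)
  | prod (a b : Ty)
  | list (a : Ty)
deriving DecidableEq

/-- Binary arithmetic operators (including `+`, `≤`, `=`). -/
inductive Op : Type | plus | le | eq
deriving DecidableEq

/-- Result type of an operator. -/
def Op.resTy : Op → Ty
  | .plus => .int
  | .le => .bool
  | .eq => .bool

/-- Terms of PCFL⊕, in de Bruijn representation. -/
inductive Tm : Type
  | var (n : ℕ)
  | cnat (n : ℕ)
  | cbool (b : Bool)
  | nil
  | pair (M N : Tm)
  | cons (M N : Tm)
  | lam (M : Tm)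
  | fixp (M : Tm)
  | choice (M N : Tm)
  | ite (L M N : Tm)
  | bop (o : Op) (M N : Tm)
  | fst (M : Tm)
  | snd (M : Tm)
  | caseL (L M N : Tm)  -- in `N` : var 1 is the head, var 0 the tail
  | app (M N : Tm)
deriving DecidableEq

/-- Semantics of an operator, as a value. -/
def Op.den : Op → ℕ → ℕ → Tm
  | .plus, n, m => .cnat (n + m)
  | .le, n, m => .cbool (decide (n ≤ m))
  | .eq, n, m => .cbool (decide (n = m))

/-- Substitution of the closed term `s` for the variable `k`. -/
def subst : Tm → ℕ → Tm → Tm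
  | .var n, k, s => if n = k then s else if k < n then .var (n - 1) else .var n
  | .cnat n, _, _ => .cnat n
  | .cbool b, _, _ => .cbool b
  | .nil, _, _ => .nil
  | .pair M N, k, s => .pair (subst M k s) (subst N k s)
  | .cons M N, k, s => .cons (subst M k s) (subst N k s)
  | .lam M, k, s => .lam (subst M (k + 1) s)
  | .fixp M, k, s => .fixp (subst M (k + 1) s)
  | .choice M N, k, s => .choice (subst M k s) (subst N k s)
  | .ite L M N, k, s => .ite (subst L k s) (subst M k s) (subst N k s)
  | .bop o M N, k, s => .bop o (subst M k s) (subst N k s)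
  | .fst M, k, s => .fst (subst M k s)
  | .snd M, k, s => .snd (subst M k s)
  | .caseL L M N, k, s => .caseL (subst L k s) (subst M k s) (subst N (k + 2) s)
  | .app M N, k, s => .app (subst M k s) (subst N k s)

/-- Values of PCFL⊕. -/
inductive IsValue : Tm → Prop
  | cnat (n) : IsValue (.cnat n)
  | cbool (b) : IsValue (.cbool b)
  | nil : IsValue .nil
  | lam (M) : IsValue (.lam M)
  | fixp (M) : IsValue (.fixp M)
  | cons (M N) : IsValue (.cons M N)
  | pair (M N) : IsValue (.pair M N)

/-- The Dirac distribution on a term. -/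
noncomputable def dirac (V : Tm) : Tm → ℝ≥0∞ := fun W => if W = V then 1 else 0

/-- Big-step approximation semantics `M ⇓ 𝒟` of PCFL⊕ (call-by-value). -/
inductive Eval : Tm → (Tm → ℝ≥0∞) → Prop
  | empty (M) : Eval M 0
  | val {V} : IsValue V → Eval V (dirac V)
  | bop {M N : Tm} {D E : Tm → ℝ≥0∞} (o : Op) : Eval M D → Eval N E →
      Eval (.bop o M N)
        (fun b => ∑' (n : ℕ) (m : ℕ), D (.cnat n) * E (.cnat m) * dirac (o.den n m) b)
  | app {M N : Tm} {K F : Tm → ℝ≥0∞} {E G : Tm → Tm → Tm → ℝ≥0∞} :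
      Eval M K → Eval N F →
      (∀ P v, K (.lam P) ≠ 0 → F v ≠ 0 → Eval (subst P 0 v) (E P v)) →
      (∀ Q v, K (.fixp Q) ≠ 0 → F v ≠ 0 →
        Eval (.app (subst Q 0 (.fixp Q)) v) (G Q v)) →
      Eval (.app M N)
        (fun b => ∑' v, F v *
          ((∑' P, K (.lam P) * E P v b) + ∑' Q, K (.fixp Q) * G Q v b))
  | ite {L M₁ M₂ : Tm} {D E₁ E₂ : Tm → ℝ≥0∞} :
      Eval L D → Eval M₁ E₁ → Eval M₂ E₂ →
      Eval (.ite L M₁ M₂)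
        (fun b => D (.cbool true) * E₁ b + D (.cbool false) * E₂ b)
  | caseL {L M₁ M₂ : Tm} {D E : Tm → ℝ≥0∞} {G K : Tm → Tm → Tm → ℝ≥0∞}
      {F : Tm → Tm → Tm → ℝ≥0∞} :
      Eval L D → Eval M₁ E →
      (∀ H T, D (.cons H T) ≠ 0 → Eval H (G H T)) →
      (∀ H T, D (.cons H T) ≠ 0 → Eval T (K H T)) →
      (∀ H T V W, D (.cons H T) ≠ 0 → G H T V ≠ 0 → K H T W ≠ 0 →
        Eval (subst (subst M₂ 1 V) 0 W) (F V W)) →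
      Eval (.caseL L M₁ M₂)
        (fun b => D .nil * E b +
          ∑' H, ∑' T, ∑' V, ∑' W, D (.cons H T) * G H T V * K H T W * F V W b)
  | fst {M : Tm} {D : Tm → ℝ≥0∞} {E : Tm → Tm → Tm → ℝ≥0∞} : Eval M D →
      (∀ P N, D (.pair P N) ≠ 0 → Eval P (E P N)) →
      Eval (.fst M) (fun b => ∑' P, ∑' N, D (.pair P N) * E P N b)
  | snd {M : Tm} {D : Tm → ℝ≥0∞} {E : Tm → Tm → Tm → ℝ≥0∞} : Eval M D →
      (∀ P N, D (.pair P N) ≠ 0 → Eval N (E P N)) →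
      Eval (.snd M) (fun b => ∑' P, ∑' N, D (.pair P N) * E P N b)
  | choice {M₁ M₂ : Tm} {D₁ D₂ : Tm → ℝ≥0∞} : Eval M₁ D₁ → Eval M₂ D₂ →
      Eval (.choice M₁ M₂) (fun b => D₁ b / 2 + D₂ b / 2)

/-- The big-step semantics `⟦M⟧`: the (pointwise) supremum of all approximations. -/
noncomputable def sem (M : Tm) : Tm → ℝ≥0∞ :=
  fun V => ⨆ (D : Tm → ℝ≥0∞) (_ : Eval M D), D V

/-- Typing judgements of PCFL⊕ (Figure 1), de Bruijn style. -/
inductive HasTy : List Ty → Tm → Ty → Prop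
  | var {Γ n σ} : Γ[n]? = some σ → HasTy Γ (.var n) σ
  | cnat {Γ n} : HasTy Γ (.cnat n) .int
  | cbool {Γ b} : HasTy Γ (.cbool b) .bool
  | nil {Γ σ} : HasTy Γ .nil (.list σ)
  | pair {Γ M N σ τ} : HasTy Γ M σ → HasTy Γ N τ → HasTy Γ (.pair M N) (.prod σ τ)
  | cons {Γ M N σ} : HasTy Γ M σ → HasTy Γ N (.list σ) → HasTy Γ (.cons M N) (.list σ)
  | lam {Γ M σ τ} : HasTy (σ :: Γ) M τ → HasTy Γ (.lam M) (.arrow σ τ)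
  | fixp {Γ M σ τ} : HasTy (.arrow σ τ :: Γ) M (.arrow σ τ) →
      HasTy Γ (.fixp M) (.arrow σ τ)
  | choice {Γ M N σ} : HasTy Γ M σ → HasTy Γ N σ → HasTy Γ (.choice M N) σ
  | ite {Γ L M N σ} : HasTy Γ L .bool → HasTy Γ M σ → HasTy Γ N σ →
      HasTy Γ (.ite L M N) σ
  | bop {Γ M N} (o : Op) : HasTy Γ M .int → HasTy Γ N .int →
      HasTy Γ (.bop o M N) o.resTy
  | fst {Γ M σ τ} : HasTy Γ M (.prod σ τ) → HasTy Γ (.fst M) σ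
  | snd {Γ M σ τ} : HasTy Γ M (.prod σ τ) → HasTy Γ (.snd M) τ
  | caseL {Γ L M N σ τ} : HasTy Γ L (.list σ) → HasTy Γ M τ →
      HasTy (.list σ :: σ :: Γ) N τ → HasTy Γ (.caseL L M N) τ
  | app {Γ M N σ τ} : HasTy Γ M (.arrow σ τ) → HasTy Γ N σ → HasTy Γ (.app M N) τ

end PCFL

namespace PCFL

/-! ### Auxiliary lemmas -/

lemma mul_le_mul_cond {a a' c c' : ℝ≥0∞} (ha : a ≤ a') (h : a ≠ 0 → c ≤ c') :
    a * c ≤ a' * c' := by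
  rcases eq_or_ne a 0 with rfl | h0
  · simp
  · exact mul_le_mul' ha (h h0)

lemma mul_le_self_cond {a c : ℝ≥0∞} (h : a ≠ 0 → c ≤ 1) : a * c ≤ a := by
  rcases eq_or_ne a 0 with rfl | h0
  · simp
  · calc a * c ≤ a * 1 := mul_le_mul' le_rfl (h h0)
      _ = a := mul_one a

lemma mul4_le {a b c d a' b' c' d' : ℝ≥0∞} (ha : a ≤ a') (hb : a ≠ 0 → b ≤ b')
    (hc : a ≠ 0 → b ≠ 0 → c ≤ c') (hd : a ≠ 0 → b ≠ 0 → c ≠ 0 → d ≤ d') :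
    a * b * c * d ≤ a' * b' * c' * d' := by
  refine mul_le_mul_cond (mul_le_mul_cond (mul_le_mul_cond ha hb) ?_) ?_
  · intro h
    obtain ⟨h1, h2⟩ := mul_ne_zero_iff.mp h
    exact hc h1 h2
  · intro h
    obtain ⟨h12, h3⟩ := mul_ne_zero_iff.mp h
    obtain ⟨h1, h2⟩ := mul_ne_zero_iff.mp h12
    exact hd h1 h2 h3

lemma tsum_dirac (V : Tm) : ∑' b, dirac V b = 1 := by
  have : ∑' b, (if b = V then (1:ℝ≥0∞) else 0) = 1 := tsum_ite_eq V 1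
  simpa [dirac] using this

lemma dirac_ne_zero {V b : Tm} (h : dirac V b ≠ 0) : b = V := by
  by_contra hb
  simp [dirac, hb] at h

lemma exists_ne_zero_of_tsum_ne_zero {α : Type*} {f : α → ℝ≥0∞} (h : ∑' a, f a ≠ 0) :
    ∃ a, f a ≠ 0 := by
  contrapose! h
  exact ENNReal.tsum_eq_zero.mpr h

lemma tsum_unit (f : Unit → ℝ≥0∞) : ∑' u, f u = f () :=
  tsum_eq_single () (fun b hb => absurd (Subsingleton.elim b ()) hb)

lemma tsum_comp_le {α : Type*} (f : Tm → ℝ≥0∞) (g : α → Tm) (hg : Function.Injective g) :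
    ∑' a, f (g a) ≤ ∑' V, f V :=
  ENNReal.tsum_comp_le_tsum_of_injective hg f

lemma tsum_two_le {α β : Type*} (f : Tm → ℝ≥0∞) (g : α → Tm) (h : β → Tm)
    (hg : Function.Injective g) (hh : Function.Injective h) (hd : ∀ a b, g a ≠ h b) :
    (∑' a, f (g a)) + ∑' b, f (h b) ≤ ∑' V, f V := by
  rw [← tsum_range f hg, ← tsum_range f hh,
    ← ENNReal.summable.tsum_union_disjoint (f := f) ?_ ENNReal.summable]
  · exact tsum_comp_le f _ Subtype.val_injective
  · rw [Set.disjoint_iff_forall_ne]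
    rintro x ⟨a, rfl⟩ y ⟨b, rfl⟩
    exact hd a b

/-- Mass of any big-step approximation is at most 1. -/
theorem eval_mass : ∀ {M : Tm} {D : Tm → ℝ≥0∞}, Eval M D → ∑' V, D V ≤ 1 := by
  intro M D h
  induction h with
  | empty M => simp
  | val hV => exact le_of_eq (tsum_dirac _)
  | @bop M N D E o hM hN ihM ihN =>
    calc ∑' b, ∑' (n : ℕ) (m : ℕ), D (.cnat n) * E (.cnat m) * dirac (o.den n m) b
        = ∑' (n : ℕ) (m : ℕ), ∑' b, D (.cnat n) * E (.cnat m) * dirac (o.den n m) b := by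
          rw [ENNReal.tsum_comm]
          exact tsum_congr fun n => ENNReal.tsum_comm
      _ = ∑' (n : ℕ) (m : ℕ), D (.cnat n) * E (.cnat m) := by
          refine tsum_congr fun n => tsum_congr fun m => ?_
          rw [ENNReal.tsum_mul_left, tsum_dirac, mul_one]
      _ = (∑' (n : ℕ), D (.cnat n)) * ∑' (m : ℕ), E (.cnat m) := by
          simp only [ENNReal.tsum_mul_left, ENNReal.tsum_mul_right]
      _ ≤ 1 * 1 := by
          refine mul_le_mul' ?_ ?_
          · exact (tsum_comp_le D _ (fun a b => by simp)).trans ihM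
          · exact (tsum_comp_le E _ (fun a b => by simp)).trans ihN
      _ = 1 := one_mul 1
  | @app M N K F E G hM hN hlam hfix ihM ihN ihlam ihfix =>
    calc ∑' (b : Tm), ∑' (v : Tm), F v *
          ((∑' (P : Tm), K (.lam P) * E P v b) + ∑' (Q : Tm), K (.fixp Q) * G Q v b)
        = ∑' (v : Tm), F v * ∑' (b : Tm),
          ((∑' (P : Tm), K (.lam P) * E P v b) + ∑' (Q : Tm), K (.fixp Q) * G Q v b) := by
          rw [ENNReal.tsum_comm]
          exact tsum_congr fun v => ENNReal.tsum_mul_left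
      _ = ∑' (v : Tm), F v *
          ((∑' (P : Tm), K (.lam P) * ∑' b, E P v b) +
            ∑' (Q : Tm), K (.fixp Q) * ∑' b, G Q v b) := by
          refine tsum_congr fun v => ?_
          rw [ENNReal.tsum_add, ENNReal.tsum_comm (f := fun b P => K (.lam P) * E P v b),
            ENNReal.tsum_comm (f := fun b Q => K (.fixp Q) * G Q v b)]
          simp only [ENNReal.tsum_mul_left]
      _ ≤ ∑' (v : Tm), F v * ((∑' (P : Tm), K (.lam P)) + ∑' (Q : Tm), K (.fixp Q)) := by
          refine ENNReal.tsum_le_tsum fun v => mul_le_mul_cond le_rfl fun hv => ?_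
          refine add_le_add ?_ ?_
          · exact ENNReal.tsum_le_tsum fun P =>
              mul_le_self_cond fun hP => ihlam P v hP hv
          · exact ENNReal.tsum_le_tsum fun Q =>
              mul_le_self_cond fun hQ => ihfix Q v hQ hv
      _ ≤ ∑' (v : Tm), F v * 1 := by
          refine ENNReal.tsum_le_tsum fun v => mul_le_mul' le_rfl ?_
          refine le_trans (tsum_two_le K Tm.lam Tm.fixp ?_ ?_ ?_) ihM
          · intro a b hab; cases hab; rfl
          · intro a b hab; cases hab; rfl
          · intro a b hab; cases hab
      _ ≤ 1 := by
          simp only [mul_one]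
          exact ihN
  | @ite L M₁ M₂ D E₁ E₂ hL hM₁ hM₂ ihL ihM₁ ihM₂ =>
    calc ∑' b, (D (.cbool true) * E₁ b + D (.cbool false) * E₂ b)
        = D (.cbool true) * (∑' b, E₁ b) + D (.cbool false) * ∑' b, E₂ b := by
          rw [ENNReal.tsum_add]
          simp only [ENNReal.tsum_mul_left]
      _ ≤ D (.cbool true) + D (.cbool false) := by
          exact add_le_add (mul_le_self_cond fun _ => ihM₁) (mul_le_self_cond fun _ => ihM₂)
      _ ≤ ∑' V, D V := by
          have := tsum_two_le D (fun _ : Unit => Tm.cbool true) (fun _ : Unit => Tm.cbool false)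
            (fun a b _ => Subsingleton.elim a b) (fun a b _ => Subsingleton.elim a b)
            (fun a b => by simp)
          simpa [tsum_unit] using this
      _ ≤ 1 := ihL
  | @caseL L M₁ M₂ D E G K F hL hM₁ hG hK hF ihL ihM₁ ihG ihK ihF =>
    calc ∑' b, (D .nil * E b +
          ∑' (H : Tm) (T : Tm) (V : Tm) (W : Tm),
            D (.cons H T) * G H T V * K H T W * F V W b)
        = D .nil * (∑' b, E b) +
          ∑' (H : Tm) (T : Tm) (V : Tm) (W : Tm),
            D (.cons H T) * G H T V * K H T W * ∑' b, F V W b := by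
          rw [ENNReal.tsum_add, ENNReal.tsum_mul_left]
          congr 1
          rw [ENNReal.tsum_comm]
          refine tsum_congr fun H => ?_
          rw [ENNReal.tsum_comm]
          refine tsum_congr fun T => ?_
          rw [ENNReal.tsum_comm]
          refine tsum_congr fun V => ?_
          rw [ENNReal.tsum_comm]
          refine tsum_congr fun W => ?_
          rw [ENNReal.tsum_mul_left]
      _ ≤ D .nil + ∑' (H : Tm) (T : Tm), D (.cons H T) := by
          refine add_le_add (mul_le_self_cond fun _ => ihM₁) ?_
          refine ENNReal.tsum_le_tsum fun H => ENNReal.tsum_le_tsum fun T => ?_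
          calc ∑' (V : Tm) (W : Tm), D (.cons H T) * G H T V * K H T W * ∑' b, F V W b
              ≤ ∑' (V : Tm) (W : Tm), D (.cons H T) * G H T V * K H T W := by
                refine ENNReal.tsum_le_tsum fun V => ENNReal.tsum_le_tsum fun W => ?_
                refine mul_le_self_cond fun h => ?_
                obtain ⟨h12, h3⟩ := mul_ne_zero_iff.mp h
                obtain ⟨h1, h2⟩ := mul_ne_zero_iff.mp h12
                exact ihF H T V W h1 h2 h3
            _ = ∑' (V : Tm), D (.cons H T) * G H T V * ∑' (W : Tm), K H T W := by
                simp only [ENNReal.tsum_mul_left]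
            _ ≤ ∑' (V : Tm), D (.cons H T) * G H T V := by
                refine ENNReal.tsum_le_tsum fun V => mul_le_self_cond fun h => ?_
                exact ihK H T (mul_ne_zero_iff.mp h).1
            _ = D (.cons H T) * ∑' (V : Tm), G H T V := ENNReal.tsum_mul_left
            _ ≤ D (.cons H T) := mul_le_self_cond fun h => ihG H T h
      _ ≤ ∑' V, D V := by
          have h2 : ∑' (H : Tm) (T : Tm), D (.cons H T) =
              ∑' (p : Tm × Tm), D (.cons p.1 p.2) := (ENNReal.tsum_prod (f := fun H T => D (.cons H T))).symm
          rw [h2]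
          have := tsum_two_le D (fun _ : Unit => Tm.nil) (fun p : Tm × Tm => Tm.cons p.1 p.2)
            (fun a b _ => Subsingleton.elim a b)
            (fun a b hab => by
              cases a; cases b
              simpa using hab)
            (fun a b => by simp)
          simpa [tsum_unit] using this
      _ ≤ 1 := ihL
  | @fst M D E hM hE ihM ihE =>
    calc ∑' b, ∑' (P : Tm) (N : Tm), D (.pair P N) * E P N b
        = ∑' (P : Tm) (N : Tm), D (.pair P N) * ∑' b, E P N b := by
          rw [ENNReal.tsum_comm]
          refine tsum_congr fun P => ?_
          rw [ENNReal.tsum_comm]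
          exact tsum_congr fun N => ENNReal.tsum_mul_left
      _ ≤ ∑' (P : Tm) (N : Tm), D (.pair P N) := by
          refine ENNReal.tsum_le_tsum fun P => ENNReal.tsum_le_tsum fun N => ?_
          exact mul_le_self_cond fun h => ihE P N h
      _ ≤ 1 := by
          rw [← ENNReal.tsum_prod (f := fun P N => D (.pair P N))]
          refine le_trans (tsum_comp_le D (fun p : Tm × Tm => Tm.pair p.1 p.2) ?_) ihM
          intro a b hab
          cases a; cases b
          simpa using hab
  | @snd M D E hM hE ihM ihE =>
    calc ∑' b, ∑' (P : Tm) (N : Tm), D (.pair P N) * E P N b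
        = ∑' (P : Tm) (N : Tm), D (.pair P N) * ∑' b, E P N b := by
          rw [ENNReal.tsum_comm]
          refine tsum_congr fun P => ?_
          rw [ENNReal.tsum_comm]
          exact tsum_congr fun N => ENNReal.tsum_mul_left
      _ ≤ ∑' (P : Tm) (N : Tm), D (.pair P N) := by
          refine ENNReal.tsum_le_tsum fun P => ENNReal.tsum_le_tsum fun N => ?_
          exact mul_le_self_cond fun h => ihE P N h
      _ ≤ 1 := by
          rw [← ENNReal.tsum_prod (f := fun P N => D (.pair P N))]
          refine le_trans (tsum_comp_le D (fun p : Tm × Tm => Tm.pair p.1 p.2) ?_) ihM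
          intro a b hab
          cases a; cases b
          simpa using hab
  | @choice M₁ M₂ D₁ D₂ hM₁ hM₂ ihM₁ ihM₂ =>
    calc ∑' b, (D₁ b / 2 + D₂ b / 2)
        = (∑' b, D₁ b) / 2 + (∑' b, D₂ b) / 2 := by
          rw [ENNReal.tsum_add]
          simp only [div_eq_mul_inv, ENNReal.tsum_mul_right]
      _ ≤ 1 / 2 + 1 / 2 := by
          exact add_le_add (ENNReal.div_le_div_right ihM₁ 2) (ENNReal.div_le_div_right ihM₂ 2)
      _ = 1 := ENNReal.add_halves 1

/-- The support of any big-step approximation consists of values. -/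
theorem eval_supp : ∀ {M : Tm} {D : Tm → ℝ≥0∞}, Eval M D → ∀ V, D V ≠ 0 → IsValue V := by
  intro M D h
  induction h with
  | empty M => intro V hV; simp at hV
  | val hV =>
    intro W hW
    rw [dirac_ne_zero hW]
    exact hV
  | @bop M N D E o hM hN ihM ihN =>
    intro b hb
    obtain ⟨n, hn⟩ := exists_ne_zero_of_tsum_ne_zero hb
    obtain ⟨m, hm⟩ := exists_ne_zero_of_tsum_ne_zero hn
    have := dirac_ne_zero (mul_ne_zero_iff.mp hm).2
    subst this
    cases o
    · exact .cnat _
    · exact .cbool _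
    · exact .cbool _
  | @app M N K F E G hM hN hlam hfix ihM ihN ihlam ihfix =>
    intro b hb
    obtain ⟨v, hv⟩ := exists_ne_zero_of_tsum_ne_zero hb
    obtain ⟨hFv, hrest⟩ := mul_ne_zero_iff.mp hv
    by_cases hS : (∑' P, K (.lam P) * E P v b) = 0
    · have hT : (∑' Q, K (.fixp Q) * G Q v b) ≠ 0 := fun h0 => hrest (by simp only [hS, h0, add_zero])
      obtain ⟨Q, hQ⟩ := exists_ne_zero_of_tsum_ne_zero hT
      obtain ⟨h1, h2⟩ := mul_ne_zero_iff.mp hQ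
      exact ihfix Q v h1 hFv b h2
    · obtain ⟨P, hP⟩ := exists_ne_zero_of_tsum_ne_zero hS
      obtain ⟨h1, h2⟩ := mul_ne_zero_iff.mp hP
      exact ihlam P v h1 hFv b h2
  | @ite L M₁ M₂ D E₁ E₂ hL hM₁ hM₂ ihL ihM₁ ihM₂ =>
    intro b hb
    by_cases h1 : D (.cbool true) * E₁ b = 0
    · have h2 : D (.cbool false) * E₂ b ≠ 0 := fun h0 => hb (by simp only [h1, h0, add_zero])
      exact ihM₂ b (mul_ne_zero_iff.mp h2).2
    · exact ihM₁ b (mul_ne_zero_iff.mp h1).2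
  | @caseL L M₁ M₂ D E G K F hL hM₁ hG hK hF ihL ihM₁ ihG ihK ihF =>
    intro b hb
    by_cases h1 : D .nil * E b = 0
    · have h2 : (∑' (H : Tm) (T : Tm) (V : Tm) (W : Tm),
          D (.cons H T) * G H T V * K H T W * F V W b) ≠ 0 :=
        fun h0 => hb (by simp only [h1, h0, add_zero])
      obtain ⟨H, hH⟩ := exists_ne_zero_of_tsum_ne_zero h2
      obtain ⟨T, hT⟩ := exists_ne_zero_of_tsum_ne_zero hH
      obtain ⟨V, hV⟩ := exists_ne_zero_of_tsum_ne_zero hT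
      obtain ⟨W, hW⟩ := exists_ne_zero_of_tsum_ne_zero hV
      obtain ⟨h123, h4⟩ := mul_ne_zero_iff.mp hW
      obtain ⟨h12, h3⟩ := mul_ne_zero_iff.mp h123
      obtain ⟨hc1, hc2⟩ := mul_ne_zero_iff.mp h12
      exact ihF H T V W hc1 hc2 h3 b h4
    · exact ihM₁ b (mul_ne_zero_iff.mp h1).2
  | @fst M D E hM hE ihM ihE =>
    intro b hb
    obtain ⟨P, hP⟩ := exists_ne_zero_of_tsum_ne_zero hb
    obtain ⟨N, hN⟩ := exists_ne_zero_of_tsum_ne_zero hP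
    obtain ⟨h1, h2⟩ := mul_ne_zero_iff.mp hN
    exact ihE P N h1 b h2
  | @snd M D E hM hE ihM ihE =>
    intro b hb
    obtain ⟨P, hP⟩ := exists_ne_zero_of_tsum_ne_zero hb
    obtain ⟨N, hN⟩ := exists_ne_zero_of_tsum_ne_zero hP
    obtain ⟨h1, h2⟩ := mul_ne_zero_iff.mp hN
    exact ihE P N h1 b h2
  | @choice M₁ M₂ D₁ D₂ hM₁ hM₂ ihM₁ ihM₂ =>
    intro b hb
    by_cases h1 : D₁ b / 2 = 0
    · have h2 : D₂ b / 2 ≠ 0 := fun h0 => hb (by simp only [h1, h0, add_zero])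
      refine ihM₂ b fun h0 => h2 ?_
      rw [h0]
      simp
    · refine ihM₁ b fun h0 => h1 ?_
      rw [h0]
      simp

lemma eval_value {V : Tm} {E : Tm → ℝ≥0∞} (hV : IsValue V) (h : Eval V E) :
    E = 0 ∨ E = dirac V := by
  cases hV <;> cases h <;> first | exact Or.inl rfl | exact Or.inr rfl

/-- Combine two (conditionally available) approximations of the same term. -/
lemma combine {t : Tm} {c₁ c₂ : Prop} {E₁ E₂ : Tm → ℝ≥0∞}
    (h₁ : c₁ → Eval t E₁) (h₂ : c₂ → Eval t E₂)
    (ih : c₁ → ∀ E, Eval t E → ∃ F, Eval t F ∧ (∀ V, E₁ V ≤ F V) ∧ (∀ V, E V ≤ F V)) :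
    ∃ F, Eval t F ∧ (c₁ → ∀ V, E₁ V ≤ F V) ∧ (c₂ → ∀ V, E₂ V ≤ F V) := by
  by_cases hc₁ : c₁
  · by_cases hc₂ : c₂
    · obtain ⟨F, hF, ha, hb⟩ := ih hc₁ E₂ (h₂ hc₂)
      exact ⟨F, hF, fun _ => ha, fun _ => hb⟩
    · exact ⟨E₁, h₁ hc₁, fun _ V => le_rfl, fun h => absurd h hc₂⟩
  · by_cases hc₂ : c₂
    · exact ⟨E₂, h₂ hc₂, fun h => absurd h hc₁, fun _ V => le_rfl⟩
    · exact ⟨0, Eval.empty t, fun h => absurd h hc₁, fun h => absurd h hc₂⟩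

/-- Directedness of the big-step approximation relation. -/
theorem eval_directed : ∀ {M : Tm} {D : Tm → ℝ≥0∞}, Eval M D → ∀ E, Eval M E →
    ∃ F, Eval M F ∧ (∀ V, D V ≤ F V) ∧ (∀ V, E V ≤ F V) := by
  intro M D h
  induction h with
  | empty M =>
    intro E hE
    exact ⟨E, hE, fun V => zero_le, fun V => le_rfl⟩
  | val hV =>
    intro E hE
    rcases eval_value hV hE with rfl | rfl
    · exact ⟨dirac _, Eval.val hV, fun V => le_rfl, fun V => zero_le⟩
    · exact ⟨dirac _, Eval.val hV, fun V => le_rfl, fun V => le_rfl⟩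
  | @bop M N D₁ E₁ o hM hN ihM ihN =>
    intro Ev hEv
    cases hEv with
    | empty => exact ⟨_, Eval.bop o hM hN, fun V => le_rfl, fun V => zero_le⟩
    | val hV => cases hV
    | @bop _ _ D₂ E₂ _ hM₂ hN₂ =>
      obtain ⟨D₃, hD₃, d1, d2⟩ := ihM _ hM₂
      obtain ⟨E₃, hE₃, e1, e2⟩ := ihN _ hN₂
      refine ⟨_, Eval.bop o hD₃ hE₃, ?_, ?_⟩ <;>
      · intro b
        refine ENNReal.tsum_le_tsum fun n => ENNReal.tsum_le_tsum fun m =>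
          mul_le_mul' (mul_le_mul' ?_ ?_) le_rfl
        · first | exact d1 _ | exact d2 _
        · first | exact e1 _ | exact e2 _
  | @app M N K₁ F₁ E₁ G₁ hM hN hlam hfix ihM ihN ihlam ihfix =>
    intro Ev hEv
    cases hEv with
    | empty => exact ⟨_, Eval.app hM hN hlam hfix, fun V => le_rfl, fun V => zero_le⟩
    | val hV => cases hV
    | @app _ _ K₂ F₂ E₂ G₂ hM₂ hN₂ hlam₂ hfix₂ =>
      obtain ⟨K₃, hK₃, k1, k2⟩ := ihM _ hM₂
      obtain ⟨F₃, hF₃, f1, f2⟩ := ihN _ hN₂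
      have keyE : ∀ P v, ∃ F, Eval (subst P 0 v) F ∧
          ((K₁ (.lam P) ≠ 0 ∧ F₁ v ≠ 0) → ∀ V, E₁ P v V ≤ F V) ∧
          ((K₂ (.lam P) ≠ 0 ∧ F₂ v ≠ 0) → ∀ V, E₂ P v V ≤ F V) :=
        fun P v => combine (fun hc => hlam P v hc.1 hc.2) (fun hc => hlam₂ P v hc.1 hc.2)
          (fun hc => ihlam P v hc.1 hc.2)
      have keyG : ∀ Q v, ∃ F, Eval (.app (subst Q 0 (.fixp Q)) v) F ∧
          ((K₁ (.fixp Q) ≠ 0 ∧ F₁ v ≠ 0) → ∀ V, G₁ Q v V ≤ F V) ∧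
          ((K₂ (.fixp Q) ≠ 0 ∧ F₂ v ≠ 0) → ∀ V, G₂ Q v V ≤ F V) :=
        fun Q v => combine (fun hc => hfix Q v hc.1 hc.2) (fun hc => hfix₂ Q v hc.1 hc.2)
          (fun hc => ihfix Q v hc.1 hc.2)
      choose E₃ hE₃ e1 e2 using keyE
      choose G₃ hG₃ g1 g2 using keyG
      refine ⟨_, Eval.app hK₃ hF₃ (fun P v _ _ => hE₃ P v) (fun Q v _ _ => hG₃ Q v), ?_, ?_⟩
      · intro b
        refine ENNReal.tsum_le_tsum fun v => mul_le_mul_cond (f1 v) fun hv =>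
          add_le_add ?_ ?_
        · exact ENNReal.tsum_le_tsum fun P => mul_le_mul_cond (k1 _) fun hP =>
            e1 P v ⟨hP, hv⟩ b
        · exact ENNReal.tsum_le_tsum fun Q => mul_le_mul_cond (k1 _) fun hQ =>
            g1 Q v ⟨hQ, hv⟩ b
      · intro b
        refine ENNReal.tsum_le_tsum fun v => mul_le_mul_cond (f2 v) fun hv =>
          add_le_add ?_ ?_
        · exact ENNReal.tsum_le_tsum fun P => mul_le_mul_cond (k2 _) fun hP =>
            e2 P v ⟨hP, hv⟩ b
        · exact ENNReal.tsum_le_tsum fun Q => mul_le_mul_cond (k2 _) fun hQ =>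
            g2 Q v ⟨hQ, hv⟩ b
  | @ite L M₁ M₂ D₁ A₁ B₁ hL hA hB ihL ihA ihB =>
    intro Ev hEv
    cases hEv with
    | empty => exact ⟨_, Eval.ite hL hA hB, fun V => le_rfl, fun V => zero_le⟩
    | val hV => cases hV
    | @ite _ _ _ D₂ A₂ B₂ hL₂ hA₂ hB₂ =>
      obtain ⟨D₃, hD₃, d1, d2⟩ := ihL _ hL₂
      obtain ⟨A₃, hA₃, a1, a2⟩ := ihA _ hA₂
      obtain ⟨B₃, hB₃, b1, b2⟩ := ihB _ hB₂
      refine ⟨_, Eval.ite hD₃ hA₃ hB₃, ?_, ?_⟩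
      · exact fun b => add_le_add (mul_le_mul' (d1 _) (a1 b)) (mul_le_mul' (d1 _) (b1 b))
      · exact fun b => add_le_add (mul_le_mul' (d2 _) (a2 b)) (mul_le_mul' (d2 _) (b2 b))
  | @caseL L M₁ M₂ D₁ E₁ G₁ K₁ F₁ hL hE hG hK hF ihL ihE ihG ihK ihF =>
    intro Ev hEv
    cases hEv with
    | empty => exact ⟨_, Eval.caseL hL hE hG hK hF, fun V => le_rfl, fun V => zero_le⟩
    | val hV => cases hV
    | @caseL _ _ _ D₂ E₂ G₂ K₂ F₂ hL₂ hE₂ hG₂ hK₂ hF₂ =>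
      obtain ⟨D₃, hD₃, d1, d2⟩ := ihL _ hL₂
      obtain ⟨E₃, hE₃, e1, e2⟩ := ihE _ hE₂
      have keyG : ∀ H T, ∃ F, Eval H F ∧
          (D₁ (.cons H T) ≠ 0 → ∀ V, G₁ H T V ≤ F V) ∧
          (D₂ (.cons H T) ≠ 0 → ∀ V, G₂ H T V ≤ F V) :=
        fun H T => combine (hG H T) (hG₂ H T) (ihG H T)
      have keyK : ∀ H T, ∃ F, Eval T F ∧
          (D₁ (.cons H T) ≠ 0 → ∀ V, K₁ H T V ≤ F V) ∧
          (D₂ (.cons H T) ≠ 0 → ∀ V, K₂ H T V ≤ F V) :=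
        fun H T => combine (hK H T) (hK₂ H T) (ihK H T)
      choose G₃ hG₃ g1 g2 using keyG
      choose K₃ hK₃ kk1 kk2 using keyK
      have keyF : ∀ V W, ∃ F, Eval (subst (subst M₂ 1 V) 0 W) F ∧
          ((∃ H T, D₁ (.cons H T) ≠ 0 ∧ G₁ H T V ≠ 0 ∧ K₁ H T W ≠ 0) →
            ∀ b, F₁ V W b ≤ F b) ∧
          ((∃ H T, D₂ (.cons H T) ≠ 0 ∧ G₂ H T V ≠ 0 ∧ K₂ H T W ≠ 0) →
            ∀ b, F₂ V W b ≤ F b) := by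
        intro V W
        refine combine (fun hc => ?_) (fun hc => ?_) (fun hc => ?_)
        · obtain ⟨H, T, h1, h2, h3⟩ := hc
          exact hF H T V W h1 h2 h3
        · obtain ⟨H, T, h1, h2, h3⟩ := hc
          exact hF₂ H T V W h1 h2 h3
        · obtain ⟨H, T, h1, h2, h3⟩ := hc
          exact ihF H T V W h1 h2 h3
      choose F₃ hF₃ ff1 ff2 using keyF
      refine ⟨_, Eval.caseL hD₃ hE₃ (fun H T _ => hG₃ H T) (fun H T _ => hK₃ H T)
        (fun H T V W _ _ _ => hF₃ V W), ?_, ?_⟩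
      · intro b
        refine add_le_add (mul_le_mul' (d1 _) (e1 b)) ?_
        refine ENNReal.tsum_le_tsum fun H => ENNReal.tsum_le_tsum fun T =>
          ENNReal.tsum_le_tsum fun V => ENNReal.tsum_le_tsum fun W => ?_
        exact mul4_le (d1 _) (fun h1 => g1 H T h1 V) (fun h1 h2 => kk1 H T h1 W)
          (fun h1 h2 h3 => ff1 V W ⟨H, T, h1, h2, h3⟩ b)
      · intro b
        refine add_le_add (mul_le_mul' (d2 _) (e2 b)) ?_
        refine ENNReal.tsum_le_tsum fun H => ENNReal.tsum_le_tsum fun T =>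
          ENNReal.tsum_le_tsum fun V => ENNReal.tsum_le_tsum fun W => ?_
        exact mul4_le (d2 _) (fun h1 => g2 H T h1 V) (fun h1 h2 => kk2 H T h1 W)
          (fun h1 h2 h3 => ff2 V W ⟨H, T, h1, h2, h3⟩ b)
  | @fst M D₁ E₁ hM hE ihM ihE =>
    intro Ev hEv
    cases hEv with
    | empty => exact ⟨_, Eval.fst hM hE, fun V => le_rfl, fun V => zero_le⟩
    | val hV => cases hV
    | @fst _ D₂ E₂ hM₂ hE₂ =>
      obtain ⟨D₃, hD₃, d1, d2⟩ := ihM _ hM₂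
      have key : ∀ P N, ∃ F, Eval P F ∧
          (D₁ (.pair P N) ≠ 0 → ∀ V, E₁ P N V ≤ F V) ∧
          (D₂ (.pair P N) ≠ 0 → ∀ V, E₂ P N V ≤ F V) :=
        fun P N => combine (hE P N) (hE₂ P N) (ihE P N)
      choose E₃ hE₃ e1 e2 using key
      refine ⟨_, Eval.fst hD₃ (fun P N _ => hE₃ P N), ?_, ?_⟩
      · exact fun b => ENNReal.tsum_le_tsum fun P => ENNReal.tsum_le_tsum fun N =>
          mul_le_mul_cond (d1 _) fun h => e1 P N h b
      · exact fun b => ENNReal.tsum_le_tsum fun P => ENNReal.tsum_le_tsum fun N =>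
          mul_le_mul_cond (d2 _) fun h => e2 P N h b
  | @snd M D₁ E₁ hM hE ihM ihE =>
    intro Ev hEv
    cases hEv with
    | empty => exact ⟨_, Eval.snd hM hE, fun V => le_rfl, fun V => zero_le⟩
    | val hV => cases hV
    | @snd _ D₂ E₂ hM₂ hE₂ =>
      obtain ⟨D₃, hD₃, d1, d2⟩ := ihM _ hM₂
      have key : ∀ P N, ∃ F, Eval N F ∧
          (D₁ (.pair P N) ≠ 0 → ∀ V, E₁ P N V ≤ F V) ∧
          (D₂ (.pair P N) ≠ 0 → ∀ V, E₂ P N V ≤ F V) :=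
        fun P N => combine (hE P N) (hE₂ P N) (ihE P N)
      choose E₃ hE₃ e1 e2 using key
      refine ⟨_, Eval.snd hD₃ (fun P N _ => hE₃ P N), ?_, ?_⟩
      · exact fun b => ENNReal.tsum_le_tsum fun P => ENNReal.tsum_le_tsum fun N =>
          mul_le_mul_cond (d1 _) fun h => e1 P N h b
      · exact fun b => ENNReal.tsum_le_tsum fun P => ENNReal.tsum_le_tsum fun N =>
          mul_le_mul_cond (d2 _) fun h => e2 P N h b
  | @choice M₁ M₂ A₁ B₁ hA hB ihA ihB =>
    intro Ev hEv
    cases hEv with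
    | empty => exact ⟨_, Eval.choice hA hB, fun V => le_rfl, fun V => zero_le⟩
    | val hV => cases hV
    | @choice _ _ A₂ B₂ hA₂ hB₂ =>
      obtain ⟨A₃, hA₃, a1, a2⟩ := ihA _ hA₂
      obtain ⟨B₃, hB₃, b1, b2⟩ := ihB _ hB₂
      refine ⟨_, Eval.choice hA₃ hB₃, ?_, ?_⟩
      · exact fun b => add_le_add (ENNReal.div_le_div_right (a1 b) 2)
          (ENNReal.div_le_div_right (b1 b) 2)
      · exact fun b => add_le_add (ENNReal.div_le_div_right (a2 b) 2)
          (ENNReal.div_le_div_right (b2 b) 2)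

/-- the big-step approximations of a term are directed (any two are
dominated by a third), and their pointwise supremum `⟦M⟧` is a well-defined value
distribution (its support consists of values and its total mass is at most 1). -/
theorem stmt9 :
    (∀ (M : Tm) (D E : Tm → ℝ≥0∞), Eval M D → Eval M E →
      ∃ F : Tm → ℝ≥0∞, Eval M F ∧ (∀ V, D V ≤ F V) ∧ (∀ V, E V ≤ F V)) ∧
    (∀ M : Tm, DirectedOn (· ≤ ·) {D : Tm → ℝ≥0∞ | Eval M D}) ∧
    (∀ M : Tm, (∑' V, sem M V) ≤ 1 ∧ ∀ V, sem M V ≠ 0 → IsValue V) := by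
  refine ⟨fun M D E hD hE => eval_directed hD E hE, ?_, ?_⟩
  · intro M D hD E hE
    obtain ⟨F, hF, h1, h2⟩ := eval_directed hD E hE
    exact ⟨F, hF, h1, h2⟩
  · intro M
    constructor
    · rw [ENNReal.tsum_eq_iSup_sum]
      refine iSup_le fun s => ?_
      have hsem : ∀ V, sem M V = ⨆ d : {D : Tm → ℝ≥0∞ // Eval M D}, d.1 V := by
        intro V
        rw [sem, iSup_subtype']
      calc ∑ V ∈ s, sem M V
          = ∑ V ∈ s, ⨆ d : {D : Tm → ℝ≥0∞ // Eval M D}, d.1 V :=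
            Finset.sum_congr rfl fun V _ => hsem V
        _ = ⨆ d : {D : Tm → ℝ≥0∞ // Eval M D}, ∑ V ∈ s, d.1 V := by
            refine ENNReal.finsetSum_iSup fun i j => ?_
            obtain ⟨F, hF, h1, h2⟩ := eval_directed i.2 j.1 j.2
            exact ⟨⟨F, hF⟩, fun a => ⟨h1 a, h2 a⟩⟩
        _ ≤ 1 := by
            refine iSup_le fun d => ?_
            exact le_trans (ENNReal.sum_le_tsum s) (eval_mass d.2)
    · intro V hV
      have h : ¬ ∀ (D : Tm → ℝ≥0∞), Eval M D → D V = 0 := by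
        intro hall
        apply hV
        simp only [sem, ENNReal.iSup_eq_zero]
        exact hall
      push_neg at h
      obtain ⟨D, hD, hDV⟩ := h
      exact eval_supp hD V hDV

end PCFL
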